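/- Let 0 < τ < π, and set m = (2/τ)·tan(τ/2) and k = sin(τ)/τ. Then the move-kick-move product of 2×2 real matrices [[1, mτ/2],[0,1]] · [[1,0],[−kτ,1]] · [[1, mτ/2],[0,1]] equals the rotation matrix [[cos τ, sin τ],[−sin τ, cos τ]]. (I.e., interchanging the roles of kick and kinetic steps, the symmetric splitting with these modified coefficients reproduces the exact time-τ flow of the harmonic oscillator H = (p² + q²)/2.) -/

import Mathlib

open Real

theorem move_kick_move_harmonic_oscillator_exact
    (τ : ℝ) (h0 : 0 < τ) (hπ : τ < Real.pi)
    (m k : ℝ) (hm : m = (2 / τ) * Real.tan (τ / 2)) (hk : k = Real.sin τ / τ) :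
    !![1, m * τ / 2; 0, 1] * !![1, 0; -(k * τ), 1] * !![1, m * τ / 2; 0, 1]
      = !![Real.cos τ, Real.sin τ; -Real.sin τ, Real.cos τ] := by
  have hτ : τ ≠ 0 := ne_of_gt h0
  have hc : Real.cos (τ / 2) ≠ 0 := by
    apply ne_of_gt
    apply Real.cos_pos_of_mem_Ioo
    constructor <;> [linarith [Real.pi_pos]; linarith]
  have hm' : m * τ / 2 = Real.tan (τ / 2) := by
    rw [hm]; field_simp
  have hk' : k * τ = Real.sin τ := by
    rw [hk]; field_simp
  have hsin : Real.sin τ = 2 * Real.sin (τ / 2) * Real.cos (τ / 2) := by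
    have := Real.sin_two_mul (τ / 2)
    rw [show 2 * (τ / 2) = τ by ring] at this
    linarith
  have hcos : Real.cos τ = Real.cos (τ / 2) ^ 2 - Real.sin (τ / 2) ^ 2 := by
    have := Real.cos_two_mul (τ / 2)
    rw [show 2 * (τ / 2) = τ by ring] at this
    nlinarith [Real.sin_sq_add_cos_sq (τ / 2)]
  have hpyth := Real.sin_sq_add_cos_sq (τ / 2)
  rw [hm', hk', Real.tan_eq_sin_div_cos, hsin, hcos]
  ext i j
  fin_cases i <;> fin_cases j <;>
    simp [Matrix.mul_apply, Fin.sum_univ_succ] <;> field_simp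
  · linear_combination (-1 : ℝ) * hpyth
  · linear_combination (-2 * Real.sin (τ / 2)) * hpyth
  · linear_combination (-1 : ℝ) * hpyth
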